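/- Let n be a natural number and let X and Y be finite sets (Finsets) of vectors in Fin n → ZMod 2 such that for every x ∈ X and every y ∈ Y the inner product ∑ i, x i * y i equals 0 in ZMod 2. Then X.card * Y.card ≤ 2^n. -/

import Mathlib

open Module Submodule

theorem zero_monochromatic_rectangle_card_le
    (n : ℕ) (X Y : Finset (Fin n → ZMod 2))
    (h : ∀ x ∈ X, ∀ y ∈ Y, ∑ i, x i * y i = (0 : ZMod 2)) :
    X.card * Y.card ≤ 2 ^ n := by
  classical
  let B : (Fin n → ZMod 2) →ₗ[ZMod 2] Module.Dual (ZMod 2) (Fin n → ZMod 2) :=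
    LinearMap.mk₂ (ZMod 2) (fun y x => dotProduct x y)
      (fun m₁ m₂ x => by simp [dotProduct_add])
      (fun c m x => by
        show dotProduct x (c • m) = c • dotProduct x m
        rw [dotProduct_smul])
      (fun m x₁ x₂ => by simp [add_dotProduct])
      (fun c m x => by
        show dotProduct (c • x) m = c • dotProduct x m
        rw [smul_dotProduct])
  have hBinj : Function.Injective B := by
    rw [← LinearMap.ker_eq_bot, LinearMap.ker_eq_bot']
    intro y hy
    apply dotProduct_eq_zero
    intro w
    have := congrArg (fun f => f w) hy
    simpa [B, dotProduct_comm] using this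
  let U : Submodule (ZMod 2) (Fin n → ZMod 2) := span (ZMod 2) (X : Set (Fin n → ZMod 2))
  let W := (span (ZMod 2) (Y : Set (Fin n → ZMod 2))).map B
  have hUW : U ≤ W.dualCoannihilator := by
    rw [span_le]
    intro x hx
    rw [SetLike.mem_coe, Submodule.mem_dualCoannihilator]
    intro φ hφ
    obtain ⟨y, hy, rfl⟩ := Submodule.mem_map.mp hφ
    have key : ∀ y ∈ (Y : Set (Fin n → ZMod 2)), B y x = 0 := by
      intro y hy
      have := h x hx y hy
      simpa [B, dotProduct, mul_comm] using this
    refine Submodule.span_induction key ?_ ?_ ?_ hy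
    · simp
    · intro a b _ _ ha hb; simp [ha, hb]
    · intro c a _ ha; simp [ha]
  have hrank : finrank (ZMod 2) U + finrank (ZMod 2) W ≤ n := by
    have h1 : finrank (ZMod 2) W + finrank (ZMod 2) W.dualCoannihilator
        = finrank (ZMod 2) (Fin n → ZMod 2) :=
      Subspace.finrank_add_finrank_dualCoannihilator_eq W
    have h2 : finrank (ZMod 2) U ≤ finrank (ZMod 2) W.dualCoannihilator :=
      Submodule.finrank_mono hUW
    have h3 : finrank (ZMod 2) (Fin n → ZMod 2) = n := by simp
    omega
  have hWrank : finrank (ZMod 2) W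
      = finrank (ZMod 2) (span (ZMod 2) (Y : Set (Fin n → ZMod 2))) :=
    (LinearEquiv.finrank_eq (Submodule.equivMapOfInjective B hBinj _)).symm
  have cardbound : ∀ Z : Finset (Fin n → ZMod 2),
      Z.card ≤ 2 ^ finrank (ZMod 2) (span (ZMod 2) (Z : Set (Fin n → ZMod 2))) := by
    intro Z
    calc Z.card = (Z : Set (Fin n → ZMod 2)).ncard := (Set.ncard_coe_finset Z).symm
      _ ≤ ((span (ZMod 2) (Z : Set (Fin n → ZMod 2)) : Submodule (ZMod 2) _) :
            Set (Fin n → ZMod 2)).ncard :=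
          Set.ncard_le_ncard Submodule.subset_span (Set.toFinite _)
      _ = Nat.card (span (ZMod 2) (Z : Set (Fin n → ZMod 2))) := by
          rw [← Nat.card_coe_set_eq]
          exact Nat.card_congr (Equiv.setCongr rfl)
      _ = 2 ^ finrank (ZMod 2) (span (ZMod 2) (Z : Set (Fin n → ZMod 2))) := by
          letI : Fintype (span (ZMod 2) (Z : Set (Fin n → ZMod 2))) := Fintype.ofFinite _
          rw [Nat.card_eq_fintype_card]
          have := card_eq_pow_finrank (K := ZMod 2)
            (V := span (ZMod 2) (Z : Set (Fin n → ZMod 2)))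
          rwa [ZMod.card] at this
  calc X.card * Y.card
      ≤ 2 ^ finrank (ZMod 2) U
        * 2 ^ finrank (ZMod 2) (span (ZMod 2) (Y : Set (Fin n → ZMod 2))) :=
        Nat.mul_le_mul (cardbound X) (cardbound Y)
    _ = 2 ^ (finrank (ZMod 2) U + finrank (ZMod 2) W) := by rw [hWrank, pow_add]
    _ ≤ 2 ^ n := Nat.pow_le_pow_right (by norm_num) hrank
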